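/- The NAP partial compositions on labelled rooted trees satisfy nested associativity: for rooted trees x on S, y on T, z on R, with s ∈ S a vertex of x and t ∈ T a vertex of y, one has (x ∘_s y) ∘_t z = x ∘_s (y ∘_t z). -/
import Mathlib


/-- A labelled rooted tree with vertex set `supp` inside an ambient label type `V`,
given by its root and its parent function (normalized to the identity outside
`supp`, and fixing the root). -/
structure LTree (V : Type) where
  supp : Finset V
  root : V
  parent : V → V

namespace LTree

variable {V : Type} [DecidableEq V]

/-- `t` is an honest rooted tree on its vertex set `t.supp`:  the root is a vertex,
the parent map fixes the root, sends vertices to vertices, every vertex reaches the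
root by iterating the parent map (connectedness/acyclicity), and the parent map is
normalized to the identity outside the vertex set. -/
def IsTree (t : LTree V) : Prop :=
  t.root ∈ t.supp ∧ t.parent t.root = t.root ∧
    (∀ v ∈ t.supp, t.parent v ∈ t.supp ∧ ∃ n, t.parent^[n] v = t.root) ∧
    (∀ v, v ∉ t.supp → t.parent v = v)

/-- The NAP partial composition `u ∘ₛ v`: replace the vertex `s` of `u` by the tree
`v`, reconnecting each edge of `u` arriving at `s` to the root of `v`. -/
def ncomp (u : LTree V) (s : V) (v : LTree V) : LTree V where
  supp := u.supp.erase s ∪ v.supp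
  root := if u.root = s then v.root else u.root
  parent x :=
    if x ∈ u.supp.erase s then (if u.parent x = s then v.root else u.parent x)
    else if x ∈ v.supp then
      (if x = v.root then (if u.parent s = s then v.root else u.parent s) else v.parent x)
    else x

/-- Relabelling a tree along a bijection of the ambient label type. -/
def relabel (e : V ≃ V) (t : LTree V) : LTree V where
  supp := t.supp.image e
  root := e t.root
  parent x := e (t.parent (e.symm x))

/-- The single-vertex tree on the vertex `a`. -/
def eta (a : V) : LTree V := ⟨{a}, a, fun x => x⟩

/-- The edges of `u` arriving at `s`, identified with the children of `s`. -/
def children (u : LTree V) (s : V) : Finset V :=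
  (u.supp.erase s).filter (fun w => u.parent w = s)

/-- The tree `u ∘ₛᶠ v` for `f : In(s,u) → Ver(v)`: replace the vertex `s` of `u` by
the tree `v`, reconnecting each edge `a ∈ In(s,u)` to the vertex `f a` of `v`. -/
def fcomp (u : LTree V) (s : V) (v : LTree V) (f : V → V) : LTree V where
  supp := u.supp.erase s ∪ v.supp
  root := if u.root = s then v.root else u.root
  parent x :=
    if x ∈ u.supp.erase s then (if u.parent x = s then f x else u.parent x)
    else if x ∈ v.supp then
      (if x = v.root then (if u.parent s = s then v.root else u.parent s) else v.parent x)
    else x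

/-- The Pre-Lie partial composition `u ∘ₛ v := Σ_{f : In(s,u) → Ver(v)} u ∘ₛᶠ v`,
a formal linear combination of rooted trees. -/
noncomputable def plcomp (u : LTree V) (s : V) (v : LTree V) : LTree V →₀ ℚ :=
  ∑ f : {w // w ∈ children u s} → {x // x ∈ v.supp},
    Finsupp.single
      (fcomp u s v (fun w => if h : w ∈ children u s then (f ⟨w, h⟩ : V) else v.root)) 1

/-- Bilinear extension of the Pre-Lie partial composition to formal sums. -/
noncomputable def plext (x : LTree V →₀ ℚ) (s : V) (y : LTree V →₀ ℚ) : LTree V →₀ ℚ :=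
  x.sum fun t a => y.sum fun u b => (a * b) • plcomp t s u

end LTree

open LTree in
/-- NAP nested associativity: for rooted trees `x`, `y`, `z` with pairwise disjoint
vertex sets, `s` a vertex of `x` and `t` a vertex of `y`,
`(x ∘ₛ y) ∘ₜ z = x ∘ₛ (y ∘ₜ z)`. -/
theorem nap_nested_assoc {V : Type} [DecidableEq V] (x y z : LTree V)
    (hx : x.IsTree) (hy : y.IsTree) (hz : z.IsTree)
    (hxy : Disjoint x.supp y.supp) (hxz : Disjoint x.supp z.supp)
    (hyz : Disjoint y.supp z.supp)
    (s t : V) (hs : s ∈ x.supp) (ht : t ∈ y.supp) :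
    ncomp (ncomp x s y) t z = ncomp x s (ncomp y t z) := by
  obtain ⟨hxr, hxpr, hxp, hxo⟩ := hx
  obtain ⟨hyr, hypr, hyp, hyo⟩ := hy
  obtain ⟨hzr, hzpr, hzp, hzo⟩ := hz
  have hXY : ∀ a, a ∈ x.supp → a ∉ y.supp := fun a h => Finset.disjoint_left.mp hxy h
  have hXZ : ∀ a, a ∈ x.supp → a ∉ z.supp := fun a h => Finset.disjoint_left.mp hxz h
  have hYZ : ∀ a, a ∈ y.supp → a ∉ z.supp := fun a h => Finset.disjoint_left.mp hyz h
  have hxpv : ∀ v ∈ x.supp, x.parent v ∈ x.supp := fun v h => (hxp v h).1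
  have hypv : ∀ v ∈ y.supp, y.parent v ∈ y.supp := fun v h => (hyp v h).1
  have hzpv : ∀ v ∈ z.supp, z.parent v ∈ z.supp := fun v h => (hzp v h).1
  clear hxp hyp hzp hxy hxz hyz
  have hst : s ≠ t := fun h => hXY s hs (h ▸ ht)
  simp only [ncomp]
  congr 1
  · ext a
    simp only [Finset.mem_union, Finset.mem_erase]
    have h1 : a ∈ x.supp → a ≠ t := fun h h' => hXY a h (h' ▸ ht)
    tauto
  · have hxrt : x.root ≠ t := fun h => hXY _ hxr (h ▸ ht)
    split_ifs <;> simp_all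
  · funext v
    by_cases hvx : v ∈ x.supp
    · have hvy : v ∉ y.supp := hXY v hvx
      have hvz : v ∉ z.supp := hXZ v hvx
      have hvt : v ≠ t := fun h => hvy (h ▸ ht)
      by_cases hvs : v = s
      · subst hvs
        simp [Finset.mem_erase, Finset.mem_union, hvy, hvz, hst]
      · have hpv : x.parent v ∈ x.supp := hxpv v hvx
        have hpvt : x.parent v ≠ t := fun h => hXY _ hpv (h ▸ ht)
        simp only [Finset.mem_erase, Finset.mem_union]
        by_cases hps : x.parent v = s
        · simp [hvs, hvx, hvt, hvy, hps, hyr]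
        · simp [hvs, hvx, hvt, hvy, hps, hpvt]
    · by_cases hvy : v ∈ y.supp
      · have hvz : v ∉ z.supp := hYZ v hvy
        have hvs : v ≠ s := fun h => hvx (h ▸ hs)
        by_cases hvt : v = t
        · subst hvt
          simp [Finset.mem_erase, Finset.mem_union, hvx, hvz, hvs]
        · have hpsx : x.parent s ∈ x.supp := hxpv s hs
          have hpst : x.parent s ≠ t := fun h => hXY _ hpsx (h ▸ ht)
          have hpv : y.parent v ∈ y.supp := hypv v hvy
          have hpvz : y.parent v ∉ z.supp := hYZ _ hpv
          have hvzr : v ≠ z.root := fun h => hvz (h ▸ hzr)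
          have hyx : y.root ∉ x.supp := fun h => hXY _ h hyr
          simp only [Finset.mem_erase, Finset.mem_union]
          by_cases hvr : v = y.root
          · subst hvr
            have hty : ¬ t = y.root := fun h => hvt h.symm
            by_cases hps : x.parent s = s
            · simp [hvx, hvy, hvs, hvt, hty, hyx, hyr, hps]
            · simp [hvx, hvy, hvs, hvt, hty, hyx, hyr, hps, hpst]
          · by_cases hyt : y.root = t
            · subst hyt
              by_cases hpt : y.parent v = y.root
              · simp [hvx, hvy, hvs, hvt, hvr, hpt, hvzr]
              · simp [hvx, hvy, hvs, hvt, hvr, hpt, hvzr, hpvz]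
            · by_cases hpt : y.parent v = t
              · simp [hvx, hvy, hvs, hvt, hvr, hyt, hpt, hvzr]
              · simp [hvx, hvy, hvs, hvt, hvr, hyt, hpt, hvzr, hpvz]
      · by_cases hvz : v ∈ z.supp
        · have hvs : v ≠ s := fun h => hvx (h ▸ hs)
          have hvt : v ≠ t := fun h => hvy (h ▸ ht)
          have htx : t ∉ x.supp := fun h => hXY _ h ht
          have hts : ¬ t = s := fun h => hst h.symm
          have hpsx : x.parent s ∈ x.supp := hxpv s hs
          have hpst : ¬ x.parent s = t := fun h => hXY _ hpsx (h ▸ ht)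
          have hpt : y.parent t ∈ y.supp := hypv t ht
          have hptz : y.parent t ∉ z.supp := hYZ _ hpt
          have hyrz : y.root ∉ z.supp := hYZ _ hyr
          have hyx : y.root ∉ x.supp := fun h => hXY _ h hyr
          simp only [Finset.mem_erase, Finset.mem_union]
          by_cases hvr : v = z.root
          · subst hvr
            by_cases hyt : y.root = t
            · subst hyt
              by_cases hps : x.parent s = s
              · simp [hvx, hvy, hvz, hvs, hvt, htx, ht, hts, hps, hyx]
              · have hpsz : x.parent s ∉ z.supp := hXZ _ hpsx
                simp [hvx, hvy, hvz, hvs, hvt, htx, ht, hts, hps, hpst, hpsz, hyx]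
            · have hty : ¬ t = y.root := fun h => hyt h.symm
              have hzyr : ¬ z.root = y.root := fun h => hyrz (h ▸ hzr)
              by_cases hpyt : y.parent t = t
              · simp [hvx, hvy, hvz, hvs, hvt, htx, ht, hts, hty, hyt, hzyr, hpyt]
              · simp [hvx, hvy, hvz, hvs, hvt, htx, ht, hts, hty, hyt, hzyr, hpyt, hptz]
          · have hvyr : ¬ v = y.root := fun h => hvy (h ▸ hyr)
            by_cases hyt : y.root = t
            · subst hyt
              simp [hvx, hvy, hvz, hvs, hvt, hvr, hvyr]
            · simp [hvx, hvy, hvz, hvs, hvt, hvr, hvyr, hyt]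
        · simp [Finset.mem_erase, Finset.mem_union, hvx, hvy, hvz]
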